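/- Let R be a commutative ring, let A be a reduced commutative ring, and let φ : R → A be a ring homomorphism. Let F = Y^n + Σ_{i=1}^n C(α_i)·Y^{n−i} be a monic polynomial in (R[[X]])[Y] of degree n, and suppose there are a positive integer q, a natural number p, and F₁ ∈ (R[[T]])[Z] such that substituting X ↦ T^q in the coefficients of F and Y ↦ T^p·Z yields T^{np}·F₁(T,Z); that is, Σ_{i=0}^n σ_q(α_i)·T^{p(n−i)}·Z^{n−i} = T^{np}·F₁ in (R[[T]])[Z] (with α₀ = 1). If there exist a positive integer m and η₁, …, η_n ∈ A[[U]] such that the image of F obtained by applying φ coefficient-wise and then substituting X ↦ U^m equals ∏_{i=1}^n (Y − C(η_i)), then there exist c₁, …, c_n ∈ A such that the polynomial in A[Z] obtained from F₁ by sending each coefficient β ∈ R[[T]] to φ(constant coefficient of β) equals ∏_{i=1}^n (Z − C(c_i)). -/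

import Mathlib

/-- The ring homomorphism `R[[X]] → R[[T]]` sending `Σ aᵢ Xⁱ` to `Σ aᵢ T^(m·i)`,
i.e. coefficient-wise substitution of `T^m` for `X`. -/
noncomputable def PowerSeries.substPow (R : Type*) [CommRing R] (m : ℕ+) :
    PowerSeries R →+* PowerSeries R :=
  (HahnSeries.toPowerSeries (R := R)).toRingHom.comp
    ((HahnSeries.embDomainRingHom (AddMonoidHom.mulLeft (m : ℕ))
        (fun _ _ h => Nat.eq_of_mul_eq_mul_left m.pos h)
        (fun _ _ => mul_le_mul_iff_right₀ m.pos)).comp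
      (HahnSeries.toPowerSeries (R := R)).symm.toRingHom)

namespace PowerSeries
variable {R A : Type*} [CommRing R] [CommRing A]

theorem coeff_substPow (m : ℕ+) (f : PowerSeries R) (j : ℕ) :
    coeff (R := R) j (substPow R m f) = if (m : ℕ) ∣ j then coeff (R := R) (j / (m : ℕ)) f else 0 := by
  unfold substPow
  simp only [RingHom.comp_apply, RingEquiv.toRingHom_eq_coe, RingHom.coe_coe,
    HahnSeries.embDomainRingHom_apply]
  rw [HahnSeries.coeff_toPowerSeries]
  split_ifs with h
  · obtain ⟨c, rfl⟩ := h
    have h2 : (m : ℕ) * c = (AddMonoidHom.mulLeft (m : ℕ)) c := rfl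
    rw [h2]
    erw [HahnSeries.embDomain_coeff]
    rw [← h2, Nat.mul_div_cancel_left c m.pos,
      HahnSeries.coeff_toPowerSeries_symm]
  · erw [HahnSeries.embDomain_notin_range]
    rintro ⟨c, hc⟩
    exact h ⟨c, hc.symm⟩

theorem substPow_substPow (a b : ℕ+) (f : PowerSeries R) :
    substPow R a (substPow R b f) = substPow R (a * b) f := by
  ext j
  simp only [coeff_substPow]
  rw [PNat.mul_coe]
  by_cases ha : (a : ℕ) ∣ j
  · rw [if_pos ha]
    by_cases hb : (b : ℕ) ∣ j / (a : ℕ)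
    · rw [if_pos hb, if_pos, Nat.div_div_eq_div_mul]
      rw [Nat.dvd_div_iff_mul_dvd ha] at hb
      exact (mul_comm (a:ℕ) (b:ℕ)) ▸ hb
    · rw [if_neg hb, if_neg]
      intro hab
      exact hb ((Nat.dvd_div_iff_mul_dvd ha).mpr ((mul_comm (b:ℕ) (a:ℕ)) ▸ hab))
  · rw [if_neg ha, if_neg]
    intro hab
    exact ha (dvd_trans (Dvd.intro b rfl) hab)

theorem substPow_comm (a b : ℕ+) (f : PowerSeries R) :
    substPow R a (substPow R b f) = substPow R b (substPow R a f) := by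
  rw [substPow_substPow, substPow_substPow, mul_comm]

theorem substPow_X (m : ℕ+) : substPow R m (X : PowerSeries R) = X ^ (m : ℕ) := by
  ext j
  rw [coeff_substPow, coeff_X_pow]
  by_cases hj : j = (m : ℕ)
  · subst hj
    rw [if_pos rfl, if_pos dvd_rfl, Nat.div_self m.pos, coeff_one_X]
  · rw [if_neg hj]
    split_ifs with h
    · obtain ⟨c, rfl⟩ := h
      rw [Nat.mul_div_cancel_left c m.pos, coeff_X, if_neg]
      rintro rfl
      exact hj (mul_one (m : ℕ))
    · rfl

theorem substPow_X_pow (m : ℕ+) (t : ℕ) :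
    substPow R m ((X : PowerSeries R) ^ t) = X ^ ((m : ℕ) * t) := by
  rw [map_pow, substPow_X, ← pow_mul]

theorem substPow_map (m : ℕ+) (φ : R →+* A) (f : PowerSeries R) :
    substPow A m (map φ f) = map φ (substPow R m f) := by
  ext j
  rw [coeff_substPow, coeff_map, coeff_map, coeff_substPow, apply_ite φ, map_zero]

theorem constantCoeff_substPow (m : ℕ+) (f : PowerSeries R) :
    constantCoeff (R := R) (substPow R m f) = constantCoeff (R := R) f := by
  rw [← coeff_zero_eq_constantCoeff, coeff_substPow, if_pos (dvd_zero _), Nat.zero_div,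
    coeff_zero_eq_constantCoeff]

end PowerSeries

open Polynomial

theorem polyC_cancel {S : Type*} [CommRing S] {r : S}
    (hr : ∀ x y : S, r * x = r * y → x = y) {P Q : S[X]}
    (h : C r * P = C r * Q) : P = Q := by
  ext d
  have := congrArg (fun p => Polynomial.coeff p d) h
  simp only [coeff_C_mul] at this
  exact hr _ _ this

set_option maxRecDepth 4000 in
theorem prod_X_sub_C_coeff_fin {S : Type*} [CommRing S] (n : ℕ) (v : Fin n → S) {i : ℕ}
    (h : i ≤ n) :
    (∏ l, (X - C (v l))).coeff (n - i)
      = (-1) ^ i * ∑ t ∈ Finset.powersetCard i Finset.univ, ∏ l ∈ t, v l := by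
  have hcard : (Finset.univ : Finset (Fin n)).card = n := by simp
  have h1 : (n : ℕ) - i ≤ (Finset.univ : Finset (Fin n)).card := by omega
  have := Finset.prod_X_add_C_coeff (Finset.univ : Finset (Fin n)) (fun l => -(v l)) h1
  have h2 : ∀ l : Fin n, (X : S[X]) + C (-(v l)) = X - C (v l) := fun l => by
    rw [map_neg, sub_eq_add_neg]
  simp only [h2] at this
  rw [this, hcard, Nat.sub_sub_self h, Finset.mul_sum]
  refine Finset.sum_congr rfl fun t ht => ?_
  rw [Finset.mem_powersetCard_univ] at ht
  rw [← ht, ← Finset.prod_const, ← Finset.prod_mul_distrib]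
  exact Finset.prod_congr rfl fun l _ => (neg_one_mul (v l)).symm

open PowerSeries in
theorem key_reduced {A : Type*} [CommRing A] [IsReduced A] {n k : ℕ}
    (w : Fin n → PowerSeries A)
    (h : ∀ i, 1 ≤ i → i ≤ n → ∀ j, j < k * i →
      PowerSeries.coeff (R := A) j (∑ t ∈ Finset.powersetCard i Finset.univ, ∏ l ∈ t, w l) = 0) :
    ∀ j, j < k → ∀ l, PowerSeries.coeff (R := A) j (w l) = 0 := by
  intro j
  induction j using Nat.strong_induction_on with
  | _ j IH =>
  intro hj l
  have hn : 0 < n := l.pos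
  set u : Fin n → PowerSeries A := fun l => PowerSeries.mk fun t => coeff (R := A) (j + t) (w l) with hu
  have hw : ∀ l, w l = u l * (PowerSeries.X : PowerSeries A) ^ j := by
    intro l'
    ext t
    rw [PowerSeries.coeff_mul_X_pow']
    split_ifs with ht
    · simp only [hu, coeff_mk]
      rw [Nat.add_sub_cancel' ht]
    · exact IH t (by omega) (by omega) l'
  set b : Fin n → A := fun l => constantCoeff (R := A) (u l) with hb
  have hbe : ∀ i, 1 ≤ i → i ≤ n →
      (∑ t ∈ Finset.powersetCard i Finset.univ, ∏ l ∈ t, b l) = 0 := by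
    intro i hi1 hi2
    have hji : j * i < k * i := (Nat.mul_lt_mul_right (show 0 < i by omega)).mpr hj
    have h0 := h i hi1 hi2 (j * i) hji
    rw [map_sum] at h0
    have heach : ∀ t ∈ Finset.powersetCard i (Finset.univ : Finset (Fin n)),
        coeff (R := A) (j * i) (∏ l ∈ t, w l) = ∏ l ∈ t, b l := by
      intro t ht
      rw [Finset.mem_powersetCard_univ] at ht
      have : ∏ l ∈ t, w l = (∏ l ∈ t, u l) * (PowerSeries.X : PowerSeries A) ^ (j * i) := by
        calc ∏ l ∈ t, w l = ∏ l ∈ t, (u l * (PowerSeries.X : PowerSeries A) ^ j) := Finset.prod_congr rfl fun l _ => hw l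
        _ = (∏ l ∈ t, u l) * ((PowerSeries.X : PowerSeries A) ^ j) ^ t.card := by
            rw [Finset.prod_mul_distrib, Finset.prod_const]
        _ = (∏ l ∈ t, u l) * (PowerSeries.X : PowerSeries A) ^ (j * i) := by rw [← pow_mul, ht]
      rw [this]
      have := PowerSeries.coeff_mul_X_pow (∏ l ∈ t, u l) (j * i) 0
      rw [zero_add] at this
      rw [this, coeff_zero_eq_constantCoeff, map_prod]
    rw [Finset.sum_congr rfl heach] at h0
    exact h0
  have hprod : (∏ l, (Polynomial.X - Polynomial.C (b l))) = (Polynomial.X : A[X]) ^ n := by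
    ext d
    by_cases hd : d ≤ n
    · have hrw := prod_X_sub_C_coeff_fin n b (i := n - d) (by omega)
      rw [Nat.sub_sub_self hd] at hrw
      rw [hrw, Polynomial.coeff_X_pow]
      by_cases hdn : d = n
      · subst hdn
        simp
      · rw [if_neg hdn, hbe (n - d) (by omega) (by omega), mul_zero]
    · rw [Polynomial.coeff_X_pow, if_neg (by omega)]
      apply Polynomial.coeff_eq_zero_of_natDegree_lt
      refine lt_of_le_of_lt (Polynomial.natDegree_prod_le _ _) ?_
      refine lt_of_le_of_lt
        (Finset.sum_le_sum fun l _ => Polynomial.natDegree_X_sub_C_le (b l)) ?_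
      simp only [Finset.sum_const, Finset.card_univ, Fintype.card_fin, smul_eq_mul, mul_one]
      omega
  have hnil : b l ^ n = 0 := by
    have := congrArg (Polynomial.eval (b l)) hprod
    rw [Polynomial.eval_prod, Polynomial.eval_pow, Polynomial.eval_X] at this
    rw [← this]
    exact Finset.prod_eq_zero (Finset.mem_univ l) (by simp)
  have hb0 : b l = 0 := IsReduced.eq_zero _ ⟨n, hnil⟩
  have : coeff (R := A) j (w l) = b l := by
    rw [hb, hu]
    simp only [← coeff_zero_eq_constantCoeff, coeff_mk, add_zero]
  rw [this, hb0]

open Polynomial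

/-- If `F = Y^n + Σ C(αᵢ)·Y^(n-i) ∈ (R[[X]])[Y]` satisfies
`F(T^q, T^p·Z) = T^(np)·F₁(T, Z)` and, after applying a ring homomorphism `φ : R → A` to a
reduced ring coefficient-wise and substituting `X ↦ U^m`, `F` factors linearly over `A[[U]]`,
then `F₁(0, Z)` factors linearly over `A`. -/
theorem statement16 {R A : Type*} [CommRing R] [CommRing A] [IsReduced A]
    (φ : R →+* A) (n : ℕ) (α : ℕ → PowerSeries R) (hα0 : α 0 = 1)
    (F : Polynomial (PowerSeries R))
    (hF : F = X ^ n + ∑ i ∈ Finset.Icc 1 n, C (α i) * X ^ (n - i))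
    (q : ℕ+) (p : ℕ) (F₁ : Polynomial (PowerSeries R))
    (hF₁ : ∑ i ∈ Finset.range (n + 1),
        C (PowerSeries.substPow R q (α i) * PowerSeries.X ^ (p * (n - i))) * X ^ (n - i)
      = C (PowerSeries.X ^ (n * p)) * F₁)
    (m : ℕ+) (η : Fin n → PowerSeries A)
    (hfac : F.map ((PowerSeries.substPow A m).comp (PowerSeries.map φ))
      = ∏ i, (X - C (η i))) :
    ∃ c : Fin n → A,
      F₁.map (φ.comp (PowerSeries.constantCoeff (R := R))) = ∏ i, (X - C (c i)) := by
  classical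
  set ρ : PowerSeries R →+* PowerSeries A :=
    (PowerSeries.substPow A m).comp (PowerSeries.map φ) with hρ
  set k : ℕ := (m : ℕ) * p with hk
  -- Step 1: coefficient extraction from hF₁
  have hco : ∀ i, i ≤ n → PowerSeries.substPow R q (α i) * PowerSeries.X ^ (p * (n - i))
      = PowerSeries.X ^ (n * p) * F₁.coeff (n - i) := by
    intro i hi
    have h1 := congrArg (fun P : Polynomial (PowerSeries R) => P.coeff (n - i)) hF₁
    simp only [finset_sum_coeff, coeff_C_mul, coeff_X_pow] at h1
    rw [Finset.sum_eq_single i (fun b hb hbne => by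
        rw [if_neg (by rw [Finset.mem_range] at hb; omega), mul_zero])
      (fun hni => absurd (Finset.mem_range.mpr (by omega)) hni)] at h1
    rw [if_pos rfl, mul_one] at h1
    exact h1
  -- coefficients of σ_q (α i) below p * i vanish
  have hvanish : ∀ i, i ≤ n → ∀ j, j < p * i →
      PowerSeries.coeff (R := R) j (PowerSeries.substPow R q (α i)) = 0 := by
    intro i hi j hj
    have e1 : p * i + p * (n - i) = n * p := by
      rw [← Nat.mul_add, Nat.add_sub_cancel' hi, Nat.mul_comm]
    have h1 := congrArg (PowerSeries.coeff (R := R) (j + p * (n - i))) (hco i hi)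
    rwa [PowerSeries.coeff_mul_X_pow, PowerSeries.coeff_X_pow_mul',
      if_neg (by omega)] at h1
  -- Step 2: esymm relations from hfac
  have hE : ∀ i, 1 ≤ i → i ≤ n → ρ (α i)
      = (-1) ^ i * ∑ t ∈ Finset.powersetCard i Finset.univ, ∏ l ∈ t, η l := by
    intro i hi1 hi2
    have h1 := congrArg (fun P : Polynomial (PowerSeries A) => P.coeff (n - i)) hfac
    rw [prod_X_sub_C_coeff_fin n η hi2, Polynomial.coeff_map] at h1
    have hFc : F.coeff (n - i) = α i := by
      rw [hF, Polynomial.coeff_add, coeff_X_pow, if_neg (by omega), finset_sum_coeff,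
        Finset.sum_eq_single i (fun b hb hbne => by
          rw [coeff_C_mul, coeff_X_pow, if_neg (by rw [Finset.mem_Icc] at hb; omega), mul_zero])
        (fun hni => absurd (Finset.mem_Icc.mpr ⟨hi1, hi2⟩) hni),
        coeff_C_mul, coeff_X_pow, if_pos rfl, mul_one, zero_add]
    rw [hFc] at h1
    exact h1
  -- Step 3: σ_q of the roots
  set η' : Fin n → PowerSeries A := fun l => PowerSeries.substPow A q (η l) with hη'
  have hcomm : ∀ f : PowerSeries R, PowerSeries.substPow A q (ρ f)
      = PowerSeries.substPow A m (PowerSeries.map φ (PowerSeries.substPow R q f)) := by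
    intro f
    rw [hρ, RingHom.comp_apply, PowerSeries.substPow_comm, PowerSeries.substPow_map]
  have hE' : ∀ i, 1 ≤ i → i ≤ n → ∀ j, j < k * i →
      PowerSeries.coeff (R := A) j (∑ t ∈ Finset.powersetCard i Finset.univ, ∏ l ∈ t, η' l) = 0 := by
    intro i hi1 hi2 j hj
    have e1 : (∑ t ∈ Finset.powersetCard i Finset.univ, ∏ l ∈ t, η' l)
        = PowerSeries.substPow A q
            (∑ t ∈ Finset.powersetCard i Finset.univ, ∏ l ∈ t, η l) := by
      rw [map_sum]
      exact Finset.sum_congr rfl fun t _ => (map_prod _ _ _).symm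
    have e2 : (∑ t ∈ Finset.powersetCard i Finset.univ, ∏ l ∈ t, η l)
        = (-1) ^ i * ρ (α i) := by
      rw [hE i hi1 hi2, ← mul_assoc, ← mul_pow, neg_mul_neg, one_mul, one_pow, one_mul]
    have e4 : PowerSeries.substPow A q
        (∑ t ∈ Finset.powersetCard i Finset.univ, ∏ l ∈ t, η l)
        = (-1) ^ i * PowerSeries.substPow A q (ρ (α i)) := by
      rw [e2, map_mul, map_pow, map_neg, map_one]
    have e3 : PowerSeries.coeff (R := A) j
        (PowerSeries.substPow A m (PowerSeries.map φ (PowerSeries.substPow R q (α i)))) = 0 := by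
      rw [PowerSeries.coeff_substPow]
      split_ifs with hmj
      · rw [PowerSeries.coeff_map, hvanish i hi2 _
          (Nat.div_lt_of_lt_mul (by rw [← Nat.mul_assoc]; exact hj)), map_zero]
      · rfl
    rw [e1, e4, hcomm]
    rcases Nat.even_or_odd i with hpar | hpar
    · rw [hpar.neg_one_pow, one_mul, e3]
    · rw [hpar.neg_one_pow, neg_one_mul, map_neg, e3, neg_zero]
  have hη'van : ∀ j, j < k → ∀ l, PowerSeries.coeff (R := A) j (η' l) = 0 := key_reduced η' hE'
  have hζ : ∀ l : Fin n, ∃ ζ : PowerSeries A, η' l = PowerSeries.X ^ k * ζ :=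
    fun l => PowerSeries.X_pow_dvd_iff.mpr (fun j hj => hη'van j hj l)
  choose ζ hζeq using hζ
  refine ⟨fun l => PowerSeries.constantCoeff (R := A) (ζ l), ?_⟩
  -- Step 5: the product identity
  have hstar : C ((PowerSeries.X : PowerSeries A) ^ (n * k)) * F₁.map ρ
      = ∏ l, (C ((PowerSeries.X : PowerSeries A) ^ k) * X - C (η' l)) := by
    have hmap₁ := congrArg (Polynomial.map ρ) hF₁
    have A1 : Polynomial.map ρ (C (PowerSeries.X ^ (n * p)) * F₁)
        = C ((PowerSeries.X : PowerSeries A) ^ (n * k)) * F₁.map ρ := by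
      have e5 : ρ (PowerSeries.X ^ (n * p)) = (PowerSeries.X : PowerSeries A) ^ (n * k) := by
        rw [hρ, RingHom.comp_apply, map_pow, PowerSeries.map_X, PowerSeries.substPow_X_pow,
          show (m : ℕ) * (n * p) = n * k by rw [hk]; ring]
      rw [Polynomial.map_mul, Polynomial.map_C, e5]
    have A2 : Polynomial.map ρ (∑ i ∈ Finset.range (n + 1),
          C (PowerSeries.substPow R q (α i) * PowerSeries.X ^ (p * (n - i))) * X ^ (n - i))
        = ∑ i ∈ Finset.range (n + 1),
          C (PowerSeries.substPow A q (ρ (α i)) * PowerSeries.X ^ (k * (n - i)))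
            * X ^ (n - i) := by
      rw [Polynomial.map_sum]
      refine Finset.sum_congr rfl fun i _ => ?_
      have e6 : ρ (PowerSeries.substPow R q (α i) * PowerSeries.X ^ (p * (n - i)))
          = PowerSeries.substPow A q (ρ (α i)) * PowerSeries.X ^ (k * (n - i)) := by
        rw [map_mul, hcomm (α i)]
        have e7 : ρ (PowerSeries.X ^ (p * (n - i)))
            = (PowerSeries.X : PowerSeries A) ^ (k * (n - i)) := by
          rw [hρ, RingHom.comp_apply, map_pow, PowerSeries.map_X, PowerSeries.substPow_X_pow,
            show (m : ℕ) * (p * (n - i)) = k * (n - i) by rw [hk]; ring]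
        rw [e7, hρ, RingHom.comp_apply]
      rw [Polynomial.map_mul, Polynomial.map_C, Polynomial.map_pow, Polynomial.map_X, e6]
    have A3 : ∑ i ∈ Finset.range (n + 1),
          C (PowerSeries.substPow A q (ρ (α i)) * PowerSeries.X ^ (k * (n - i)))
            * X ^ (n - i)
        = ∏ l, (C ((PowerSeries.X : PowerSeries A) ^ k) * X - C (η' l)) := by
      have hΦ := congrArg
        (⇑(Polynomial.eval₂RingHom (Polynomial.C.comp (PowerSeries.substPow A q))
          (C ((PowerSeries.X : PowerSeries A) ^ k) * X))) hfac
      -- compute RHS of hΦ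
      rw [map_prod] at hΦ
      simp only [map_sub, Polynomial.coe_eval₂RingHom, Polynomial.eval₂_X,
        Polynomial.eval₂_C, RingHom.comp_apply] at hΦ
      -- compute LHS of hΦ
      rw [hF] at hΦ
      rw [Polynomial.map_add, Polynomial.map_sum] at hΦ
      simp only [Polynomial.map_mul, Polynomial.map_C, Polynomial.map_pow, Polynomial.map_X,
        Polynomial.eval₂_add, Polynomial.eval₂_pow, Polynomial.eval₂_mul, Polynomial.eval₂_X,
        Polynomial.eval₂_C, Polynomial.eval₂_finset_sum, RingHom.comp_apply] at hΦ
      rw [← hΦ]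
      have hins : Finset.range (n + 1) = insert 0 (Finset.Icc 1 n) := by
        ext x
        simp only [Finset.mem_range, Finset.mem_insert, Finset.mem_Icc]
        omega
      rw [hins, Finset.sum_insert (by simp)]
      have hpow : ∀ e : ℕ, (C ((PowerSeries.X : PowerSeries A) ^ k) * X) ^ e
          = C ((PowerSeries.X : PowerSeries A) ^ (k * e)) * X ^ e := by
        intro e
        rw [mul_pow, ← Polynomial.C_pow, ← pow_mul]
      refine congrArg₂ (· + ·) ?_ ?_
      · rw [hα0, map_one, map_one, one_mul, Nat.sub_zero, hpow n]
      · refine Finset.sum_congr rfl fun i _ => ?_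
        rw [hpow (n - i), map_mul, mul_assoc]
    rw [← A1, ← hmap₁, A2, A3]
  -- Step 6: cancel and conclude
  have hfinal : F₁.map ρ = ∏ l, (X - C (ζ l)) := by
    refine polyC_cancel (r := (PowerSeries.X : PowerSeries A) ^ (n * k))
      (fun x y hxy => PowerSeries.X_pow_mul_cancel hxy) ?_
    rw [hstar]
    have : ∀ l : Fin n, C ((PowerSeries.X : PowerSeries A) ^ k) * X - C (η' l)
        = C ((PowerSeries.X : PowerSeries A) ^ k) * (X - C (ζ l)) := by
      intro l
      rw [hζeq l, map_mul, mul_sub]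
    rw [Finset.prod_congr rfl fun l _ => this l, Finset.prod_mul_distrib, Finset.prod_const,
      Finset.card_univ, Fintype.card_fin, ← map_pow, ← pow_mul, Nat.mul_comm k n]
  -- Step 7: apply constantCoeff
  have hcc : φ.comp (PowerSeries.constantCoeff (R := R)) = (PowerSeries.constantCoeff (R := A)).comp ρ := by
    refine RingHom.ext fun f => ?_
    rw [RingHom.comp_apply, RingHom.comp_apply, hρ, RingHom.comp_apply,
      PowerSeries.constantCoeff_substPow]
    have hccm : PowerSeries.constantCoeff (R := A) (PowerSeries.map φ f)
        = φ (PowerSeries.constantCoeff (R := R) f) := by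
      rw [← PowerSeries.coeff_zero_eq_constantCoeff_apply, PowerSeries.coeff_map,
        PowerSeries.coeff_zero_eq_constantCoeff_apply]
    rw [hccm]
  rw [hcc, ← Polynomial.map_map, hfinal, Polynomial.map_prod]
  refine Finset.prod_congr rfl fun l _ => ?_
  rw [Polynomial.map_sub, Polynomial.map_X, Polynomial.map_C]
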